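/- For all n ≥ 4 and k ≥ 1, the set of factors of length f_n of words in A_{n+1} equals the set of factors of length f_n of words in A_{n+k}. -/

import Mathlib

/-- Sets of inflated random Fibonacci words: A₁ = {0}, A₂ = {1},
    Aₙ = Aₙ₋₁Aₙ₋₂ ∪ Aₙ₋₂Aₙ₋₁ for n ≥ 3 (A₀ = ∅). -/
def wordSet : ℕ → Set (List Bool)
  | 0 => ∅
  | 1 => {[false]}
  | 2 => {[true]}
  | (n + 3) => Set.image2 (· ++ ·) (wordSet (n + 2)) (wordSet (n + 1)) ∪
      Set.image2 (· ++ ·) (wordSet (n + 1)) (wordSet (n + 2))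

/-- Concatenation of sets of words: UV = {uv : u ∈ U, v ∈ V}. -/
def cat (U V : Set (List Bool)) : Set (List Bool) := Set.image2 (· ++ ·) U V

/-- W[a,b]: the set of segments wₐ…w_b (1-based indexing) of words in W. -/
def seg (W : Set (List Bool)) (a b : ℕ) : Set (List Bool) :=
  (fun w => (w.drop (a - 1)).take (b - a + 1)) '' W

/-- F(S, m): the set of all contiguous factors of length m of words in S. -/
def factorSet (S : Set (List Bool)) (m : ℕ) : Set (List Bool) :=
  {x | x.length = m ∧ ∃ w ∈ S, x <:+: w}

/-- Fₙ: the set of factors of length fₙ occurring in any inflated word. -/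
def Fn (n : ℕ) : Set (List Bool) := ⋃ m ≥ 1, factorSet (wordSet m) (Nat.fib n)

lemma append_mem₁ {i : ℕ} {u v : List Bool} (hu : u ∈ wordSet (i + 2))
    (hv : v ∈ wordSet (i + 1)) : u ++ v ∈ wordSet (i + 3) :=
  Set.mem_union_left _ (Set.mem_image2_of_mem hu hv)

lemma append_mem₂ {i : ℕ} {u v : List Bool} (hu : u ∈ wordSet (i + 1))
    (hv : v ∈ wordSet (i + 2)) : u ++ v ∈ wordSet (i + 3) :=
  Set.mem_union_right _ (Set.mem_image2_of_mem hu hv)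

lemma wordSet_length : ∀ m, ∀ w ∈ wordSet m, w.length = Nat.fib m := by
  intro m
  induction m using Nat.strong_induction_on with
  | _ m ih =>
    match m with
    | 0 => intro w hw; exact absurd hw (by simp [wordSet])
    | 1 => intro w hw; simp only [wordSet, Set.mem_singleton_iff] at hw; subst hw; rfl
    | 2 => intro w hw; simp only [wordSet, Set.mem_singleton_iff] at hw; subst hw; rfl
    | (k + 3) =>
      intro w hw
      have hfib : Nat.fib (k + 3) = Nat.fib (k + 1) + Nat.fib (k + 2) :=
        Nat.fib_add_two (n := k + 1)
      simp only [wordSet, Set.mem_union, Set.mem_image2] at hw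
      rcases hw with ⟨u, hu, v, hv, rfl⟩ | ⟨u, hu, v, hv, rfl⟩ <;>
        simp only [List.length_append,
          ih _ (by omega) _ hu, ih _ (by omega) _ hv] <;> omega

lemma wordSet_nonempty : ∀ m, 1 ≤ m → ∃ w, w ∈ wordSet m := by
  intro m
  induction m using Nat.strong_induction_on with
  | _ m ih =>
    match m with
    | 0 => intro h; exact absurd h (by omega)
    | 1 => intro _; exact ⟨[false], rfl⟩
    | 2 => intro _; exact ⟨[true], rfl⟩
    | (k + 3) =>
      intro _
      obtain ⟨u, hu⟩ := ih (k + 2) (by omega) (by omega)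
      obtain ⟨v, hv⟩ := ih (k + 1) (by omega) (by omega)
      exact ⟨u ++ v, append_mem₁ hu hv⟩

lemma wordSet_reverse : ∀ m, ∀ w ∈ wordSet m, w.reverse ∈ wordSet m := by
  intro m
  induction m using Nat.strong_induction_on with
  | _ m ih =>
    match m with
    | 0 => intro w hw; exact absurd hw (by simp [wordSet])
    | 1 => intro w hw; simp only [wordSet, Set.mem_singleton_iff] at hw; subst hw; rfl
    | 2 => intro w hw; simp only [wordSet, Set.mem_singleton_iff] at hw; subst hw; rfl
    | (k + 3) =>
      intro w hw
      simp only [wordSet, Set.mem_union, Set.mem_image2] at hw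
      rcases hw with ⟨u, hu, v, hv, rfl⟩ | ⟨u, hu, v, hv, rfl⟩
      · rw [List.reverse_append]
        exact append_mem₂ (ih _ (by omega) _ hv) (ih _ (by omega) _ hu)
      · rw [List.reverse_append]
        exact append_mem₁ (ih _ (by omega) _ hv) (ih _ (by omega) _ hu)

/-- Any prefix of length < fib j of a word in A_m (m ≥ j ≥ 1) is a prefix of a word in A_j. -/
lemma pref_reduce : ∀ m j, 1 ≤ j → j ≤ m → ∀ w ∈ wordSet m, ∀ p, p <+: w →
    p.length < Nat.fib j → ∃ β ∈ wordSet j, p <+: β := by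
  intro m
  induction m using Nat.strong_induction_on with
  | _ m ih =>
    intro j hj hjm w hw p hpw hplen
    rcases eq_or_ne p [] with rfl | hpne
    · obtain ⟨β, hβ⟩ := wordSet_nonempty j hj
      exact ⟨β, hβ, List.nil_prefix⟩
    rcases eq_or_lt_of_le hjm with rfl | hlt
    · exact ⟨w, hw, hpw⟩
    have hp1 : 1 ≤ p.length := List.length_pos_iff.mpr hpne
    have hfj : 2 ≤ Nat.fib j := by omega
    have hj3 : 3 ≤ j := by
      by_contra h
      interval_cases j <;> simp_all
    obtain ⟨k, rfl⟩ : ∃ k, m = k + 3 := ⟨m - 3, by omega⟩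
    have key : ∀ a b, ∀ w1 ∈ wordSet a, ∀ w2 ∈ wordSet b,
        k + 1 ≤ a → a ≤ k + 2 → b = 2 * k + 3 - a → p <+: w1 ++ w2 →
        ∃ β ∈ wordSet j, p <+: β := by
      intro a b w1 hw1 w2 hw2 ha1 ha2 hb hpw'
      obtain ⟨t, ht⟩ := hpw'
      rcases List.append_eq_append_iff.mp ht with ⟨a', hu, _⟩ | ⟨q, hpq, hqw2⟩
      · -- p <+: w1
        have hpw1 : p <+: w1 := ⟨a', hu.symm⟩
        by_cases haj : j ≤ a
        · exact ih a (by omega) j hj haj w1 hw1 p hpw1 hplen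
        · -- a < j ≤ k+2, a ≥ k+1 : a = j - 1
          have haeq : a = k + 1 ∧ j = k + 2 := by omega
          obtain ⟨rfl, rfl⟩ := haeq
          obtain ⟨k', rfl⟩ : ∃ k', k = k' + 1 := ⟨k - 1, by omega⟩
          obtain ⟨δ, hδ⟩ := wordSet_nonempty (k' + 1) (by omega)
          exact ⟨w1 ++ δ, append_mem₁ hw1 hδ, hpw1.trans (List.prefix_append _ _)⟩
      · -- p = w1 ++ q, q <+: w2
        have hqpre : q <+: w2 := ⟨t, hqw2.symm⟩
        have hw1len : w1.length = Nat.fib a := wordSet_length a w1 hw1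
        have hplen' : p.length = w1.length + q.length := by rw [hpq, List.length_append]
        have hfa : Nat.fib a < Nat.fib j := by omega
        have haj : a < j := by
          by_contra h
          exact absurd (Nat.fib_mono (by omega : j ≤ a)) (by omega)
        have haeq : a = k + 1 ∧ j = k + 2 ∧ b = k + 2 := by omega
        obtain ⟨rfl, rfl, rfl⟩ := haeq
        have hfib : Nat.fib (k + 2) = Nat.fib k + Nat.fib (k + 1) := Nat.fib_add_two
        have hk1 : 1 ≤ k := by omega
        have hqlen : q.length < Nat.fib k := by omega
        obtain ⟨β₀, hβ₀, hqβ₀⟩ :=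
          ih (k + 2) (by omega) k hk1 (by omega) w2 hw2 q hqpre hqlen
        obtain ⟨k', rfl⟩ : ∃ k', k = k' + 1 := ⟨k - 1, by omega⟩
        refine ⟨w1 ++ β₀, append_mem₁ hw1 hβ₀, ?_⟩
        obtain ⟨r, rfl⟩ := hqβ₀
        exact ⟨r, by rw [hpq, List.append_assoc]⟩
    simp only [wordSet, Set.mem_union, Set.mem_image2] at hw
    rcases hw with ⟨u, hu, v, hv, rfl⟩ | ⟨u, hu, v, hv, rfl⟩
    · exact key (k + 2) (k + 1) u hu v hv (by omega) (by omega) (by omega) hpw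
    · exact key (k + 1) (k + 2) u hu v hv (by omega) (by omega) (by omega) hpw

lemma suf_reduce : ∀ m j, 1 ≤ j → j ≤ m → ∀ w ∈ wordSet m, ∀ s, s <:+ w →
    s.length < Nat.fib j → ∃ α ∈ wordSet j, s <:+ α := by
  intro m j hj hjm w hw s hsw hslen
  obtain ⟨β, hβ, hsβ⟩ := pref_reduce m j hj hjm w.reverse (wordSet_reverse m w hw)
    s.reverse (List.reverse_prefix.mpr hsw) (by simpa using hslen)
  refine ⟨β.reverse, wordSet_reverse j β hβ, ?_⟩
  have := List.reverse_suffix (l₁ := s.reverse) (l₂ := β)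
  simpa using this.mpr hsβ

lemma infix_split {x u v : List Bool} (h : x <:+: u ++ v) :
    x <:+: u ∨ x <:+: v ∨ ∃ s p, s ≠ [] ∧ p ≠ [] ∧ s <:+ u ∧ p <+: v ∧ x = s ++ p := by
  obtain ⟨s, t, ht⟩ := h
  rw [List.append_assoc] at ht
  rcases List.append_eq_append_iff.mp ht with ⟨a', hu, hxt⟩ | ⟨c', _, hv⟩
  · rcases List.append_eq_append_iff.mp hxt with ⟨a'', ha', _⟩ | ⟨c'', hx, hv'⟩
    · left; exact ⟨s, a'', by rw [hu, ha', List.append_assoc]⟩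
    · rcases eq_or_ne a' [] with rfl | ha'ne
      · right; left; exact ⟨[], t, by simp [hx, hv']⟩
      rcases eq_or_ne c'' [] with rfl | hc''ne
      · left; exact ⟨s, [], by simp [hu, hx]⟩
      · right; right; exact ⟨a', c'', ha'ne, hc''ne, ⟨s, hu.symm⟩, ⟨t, hv'.symm⟩, hx⟩
  · right; left; exact ⟨c', t, by rw [hv, ← List.append_assoc]⟩

lemma factor_up {L m : ℕ} (hm : 2 ≤ m) :
    factorSet (wordSet m) L ⊆ factorSet (wordSet (m + 1)) L := by
  rintro x ⟨hlen, w, hw, hx⟩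
  obtain ⟨k, rfl⟩ : ∃ k, m = k + 2 := ⟨m - 2, by omega⟩
  obtain ⟨δ, hδ⟩ := wordSet_nonempty (k + 1) (by omega)
  exact ⟨hlen, w ++ δ, append_mem₁ hw hδ, hx.trans (List.prefix_append w δ).isInfix⟩

lemma factor_down {n : ℕ} (hn : 4 ≤ n) : ∀ m, n ≤ m →
    factorSet (wordSet m) (Nat.fib n) ⊆ factorSet (wordSet (n + 1)) (Nat.fib n) := by
  obtain ⟨i, rfl⟩ : ∃ i, n = i + 4 := ⟨n - 4, by omega⟩
  intro m
  induction m using Nat.strong_induction_on with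
  | _ m ih =>
    intro hnm x hxmem
    obtain ⟨hlen, w, hw, hx⟩ := hxmem
    rcases eq_or_lt_of_le hnm with rfl | hlt
    · -- m = n : x = w, extend
      have hwlen := wordSet_length _ w hw
      have hxw : x = w := hx.sublist.eq_of_length (by rw [hlen, hwlen])
      subst hxw
      obtain ⟨δ, hδ⟩ := wordSet_nonempty (i + 3) (by omega)
      exact ⟨hlen, x ++ δ, append_mem₁ (i := i + 2) hw hδ,
        (List.prefix_append x δ).isInfix⟩
    rcases eq_or_lt_of_le (Nat.succ_le_of_lt hlt) with heq | hlt2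
    · -- m = n + 1
      subst heq
      exact ⟨hlen, w, hw, hx⟩
    -- m ≥ n + 2
    obtain ⟨k, rfl⟩ : ∃ k, m = k + 3 := ⟨m - 3, by omega⟩
    have hkn : i + 4 ≤ k + 1 := by omega
    have key : ∀ a b, ∀ w1 ∈ wordSet a, ∀ w2 ∈ wordSet b,
        k + 1 ≤ a → a ≤ k + 2 → k + 1 ≤ b → b ≤ k + 2 → x <:+: w1 ++ w2 →
        x ∈ factorSet (wordSet (i + 4 + 1)) (Nat.fib (i + 4)) := by
      intro a b w1 hw1 w2 hw2 ha1 ha2 hb1 hb2 hxw'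
      rcases infix_split hxw' with h1 | h2 | ⟨s, p, hsne, hpne, hsu, hpv, rfl⟩
      · exact ih a (by omega) (by omega) ⟨hlen, w1, hw1, h1⟩
      · exact ih b (by omega) (by omega) ⟨hlen, w2, hw2, h2⟩
      · have hs1 : 1 ≤ s.length := List.length_pos_iff.mpr hsne
        have hp1 : 1 ≤ p.length := List.length_pos_iff.mpr hpne
        have hsum : s.length + p.length = Nat.fib (i + 4) := by
          rw [← hlen, List.length_append]
        have hfib : Nat.fib (i + 4) = Nat.fib (i + 2) + Nat.fib (i + 3) :=
          Nat.fib_add_two (n := i + 2)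
        have hfib2 : Nat.fib (i + 2) < Nat.fib (i + 3) :=
          Nat.fib_lt_fib_succ (by omega)
        rcases lt_or_ge s.length (Nat.fib (i + 3)) with hcase | hcase
        · -- s short: s suffix of A_{i+3} word, p prefix of A_{i+4} word
          obtain ⟨α, hα, hsα⟩ := suf_reduce a (i + 3) (by omega) (by omega) w1 hw1 s hsu hcase
          obtain ⟨β, hβ, hpβ⟩ := pref_reduce b (i + 4) (by omega) (by omega) w2 hw2 p hpv
            (by omega)
          refine ⟨hlen, α ++ β, append_mem₂ (i := i + 2) hα hβ, ?_⟩
          obtain ⟨α', rfl⟩ := hsα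
          obtain ⟨β', rfl⟩ := hpβ
          exact ⟨α', β', by simp⟩
        · -- p short
          have hp' : p.length < Nat.fib (i + 3) := by omega
          obtain ⟨α, hα, hsα⟩ := suf_reduce a (i + 4) (by omega) (by omega) w1 hw1 s hsu
            (by omega)
          obtain ⟨β, hβ, hpβ⟩ := pref_reduce b (i + 3) (by omega) (by omega) w2 hw2 p hpv hp'
          refine ⟨hlen, α ++ β, append_mem₁ (i := i + 2) hα hβ, ?_⟩
          obtain ⟨α', rfl⟩ := hsα
          obtain ⟨β', rfl⟩ := hpβ
          exact ⟨α', β', by simp⟩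
    simp only [wordSet, Set.mem_union, Set.mem_image2] at hw
    rcases hw with ⟨u, hu, v, hv, rfl⟩ | ⟨u, hu, v, hv, rfl⟩
    · exact key (k + 2) (k + 1) u hu v hv (by omega) (by omega) (by omega) (by omega) hx
    · exact key (k + 1) (k + 2) u hu v hv (by omega) (by omega) (by omega) (by omega) hx

theorem stmt11 (n k : ℕ) (hn : 4 ≤ n) (hk : 1 ≤ k) :
    factorSet (wordSet (n + 1)) (Nat.fib n) = factorSet (wordSet (n + k)) (Nat.fib n) := by
  apply Set.Subset.antisymm
  · induction k, hk using Nat.le_induction with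
    | base => exact subset_rfl
    | succ k hk1 ihk => exact ihk.trans (factor_up (by omega))
  · exact factor_down hn (n + k) (by omega)
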